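/- Let f(x,y) = x·(x³ − y⁵) and g(x,y) = x·(x³ + y⁵), and let φ : ℝ → ℝ be the unique strictly increasing real analytic diffeomorphism with z⁴ − z = φ(z)⁴ + φ(z) for all z. For y ∈ ℝ write y^{5/3} := (y^{1/3})⁵, where y^{1/3} is the real cube root, and define σ : ℝ² → ℝ² by σ(x, y) = ( y^{5/3}·φ(x·y^{−5/3}), y ) for y ≠ 0 and σ(x, 0) = (x, 0). Then σ is a homeomorphism of ℝ² with σ(0,0) = (0,0), there is a neighbourhood of the origin on which both σ and σ⁻¹ are Lipschitz, and f = g ∘ σ. In particular the germs f and g are bi-Lipschitz equivalent. -/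

import Mathlib

open Filter Topology

noncomputable section

/-- A strictly increasing real analytic diffeomorphism of the real line. -/
def IsAnalyticDiffeo (φ : ℝ → ℝ) : Prop :=
  (∀ x : ℝ, AnalyticAt ℝ φ x) ∧ StrictMono φ ∧ Function.Bijective φ ∧
    ∃ ψ : ℝ → ℝ, (∀ x : ℝ, AnalyticAt ℝ ψ x) ∧
      Function.LeftInverse ψ φ ∧ Function.RightInverse ψ φ

/-- The real cube root. -/
def cbrt (y : ℝ) : ℝ := if 0 ≤ y then y ^ ((1 : ℝ) / 3) else -((-y) ^ ((1 : ℝ) / 3))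

/-- `y^{5/3} := (y^{1/3})⁵` with the real cube root. -/
def pow53 (y : ℝ) : ℝ := (cbrt y) ^ 5

/-- The map `σ(x,y) = (y^{5/3}·φ(x·y^{−5/3}), y)` for `y ≠ 0`, `σ(x,0) = (x,0)`. -/
def sigmaMap (φ : ℝ → ℝ) (p : ℝ × ℝ) : ℝ × ℝ :=
  if p.2 = 0 then (p.1, 0) else (pow53 p.2 * φ (p.1 / pow53 p.2), p.2)

lemma cbrt_cube (y : ℝ) : (cbrt y) ^ 3 = y := by
  unfold cbrt
  have key : ∀ t : ℝ, 0 ≤ t → (t ^ ((1:ℝ)/3)) ^ 3 = t := by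
    intro t ht
    rw [← Real.rpow_natCast (t ^ ((1:ℝ)/3)) 3, ← Real.rpow_mul ht]
    norm_num
  split_ifs with h
  · exact key y h
  · push_neg at h
    have := key (-y) (by linarith)
    nlinarith [this]

lemma pow53_cube (y : ℝ) : (pow53 y) ^ 3 = y ^ 5 := by
  unfold pow53
  rw [← pow_mul, show 5*3 = 3*5 from rfl, pow_mul, cbrt_cube]

lemma pow53_ne_zero {y : ℝ} (hy : y ≠ 0) : pow53 y ≠ 0 := by
  intro h
  have h3 := pow53_cube y
  rw [h] at h3
  simp at h3
  exact hy (pow_eq_zero_iff (by norm_num) |>.mp h3.symm)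

lemma continuousAt_cbrt {y : ℝ} (hy : y ≠ 0) : ContinuousAt cbrt y := by
  rcases hy.lt_or_gt with h | h
  · have hev : cbrt =ᶠ[𝓝 y] fun t => -((-t) ^ ((1:ℝ)/3)) := by
      filter_upwards [Iio_mem_nhds h] with t ht
      rw [cbrt, if_neg (not_le.mpr ht)]
    refine ContinuousAt.congr ?_ hev.symm
    exact (((Real.continuousAt_rpow_const (-y) _ (Or.inl (by linarith))).comp
      continuousAt_neg).neg)
  · have hev : cbrt =ᶠ[𝓝 y] fun t => t ^ ((1:ℝ)/3) := by
      filter_upwards [Ioi_mem_nhds h] with t ht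
      rw [cbrt, if_pos ht.le]
    exact ContinuousAt.congr (Real.continuousAt_rpow_const y _ (Or.inl h.ne')) hev.symm

lemma continuousAt_pow53 {y : ℝ} (hy : y ≠ 0) : ContinuousAt pow53 y :=
  (continuousAt_cbrt hy).pow 5

lemma lemQR (x₁ x₂ u₁ u₂ : ℝ) :
    (x₁^2+x₂^2+u₁^2+u₂^2)/2 ≤ x₁^2+x₂^2-(x₁+x₂)*(u₁+u₂)+2*(u₁^2+u₁*u₂+u₂^2) := by
  nlinarith [sq_nonneg (x₁-x₂), sq_nonneg (u₁-u₂), sq_nonneg (x₁+x₂-2*u₁-2*u₂), sq_nonneg (u₁+u₂)]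

lemma lemSR (x₁ x₂ u₁ u₂ : ℝ) :
    |2*(x₁^2+x₁*x₂+x₂^2)-(u₁+u₂)*(x₁+x₂)+u₁^2+u₂^2| ≤ 4*(x₁^2+x₂^2+u₁^2+u₂^2) := by
  rw [abs_le]
  constructor
  · nlinarith [sq_nonneg (u₁+u₂+x₁+x₂), sq_nonneg (x₁-x₂), sq_nonneg (u₁-u₂), sq_nonneg u₁, sq_nonneg u₂, sq_nonneg (x₁+x₂)]
  · nlinarith [sq_nonneg (u₁+u₂-x₁-x₂), sq_nonneg (x₁-x₂), sq_nonneg (u₁-u₂), sq_nonneg u₁, sq_nonneg u₂, sq_nonneg (x₁+x₂)]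

lemma lemSum (y₁ y₂ : ℝ) :
    |y₁^4+y₁^3*y₂+y₁^2*y₂^2+y₁*y₂^3+y₂^4| ≤ 5*(y₁^4+y₂^4) := by
  have c1 : |y₁^3*y₂| ≤ y₁^4+y₂^4 := by
    rw [abs_le]
    constructor
    · nlinarith [sq_nonneg (y₁^2+y₁*y₂), sq_nonneg (y₁^2-y₂^2), sq_nonneg (y₁*y₂+y₂^2), sq_nonneg (y₁*y₂)]
    · nlinarith [sq_nonneg (y₁^2-y₁*y₂), sq_nonneg (y₁^2-y₂^2), sq_nonneg (y₁*y₂-y₂^2), sq_nonneg (y₁*y₂)]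
  have c2 : |y₁*y₂^3| ≤ y₁^4+y₂^4 := by
    rw [abs_le]
    constructor
    · nlinarith [sq_nonneg (y₂^2+y₁*y₂), sq_nonneg (y₁^2-y₂^2), sq_nonneg (y₁*y₂+y₁^2), sq_nonneg (y₁*y₂)]
    · nlinarith [sq_nonneg (y₂^2-y₁*y₂), sq_nonneg (y₁^2-y₂^2), sq_nonneg (y₁*y₂-y₁^2), sq_nonneg (y₁*y₂)]
  have c3 : |y₁^2*y₂^2| ≤ y₁^4+y₂^4 := by
    rw [abs_le]
    constructor
    · nlinarith [sq_nonneg (y₁*y₂), sq_nonneg (y₁^2+y₂^2)]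
    · nlinarith [sq_nonneg (y₁^2-y₂^2), sq_nonneg (y₁*y₂)]
  have d1 := abs_le.mp c1
  have d2 := abs_le.mp c2
  have d3 := abs_le.mp c3
  have h4 : (0:ℝ) ≤ y₁^4+y₂^4 := by positivity
  rw [abs_le]
  constructor <;> [nlinarith [d1.1, d2.1, d3.1]; nlinarith [d1.2, d2.2, d3.2]]

lemma bound4 (x u y : ℝ) (h : (x - u) * (x^2 + u^2) = y^5) (hy : |y| ≤ 1) :
    y^4 ≤ 2*(x^2 + u^2) := by
  rcases eq_or_ne y 0 with rfl | hy0
  · nlinarith [sq_nonneg x, sq_nonneg u]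
  by_contra hlt
  push_neg at hlt
  have hy2 : y^2 ≤ 1 := by
    have := abs_le.mp hy
    nlinarith [this.1, this.2]
  have h10 : y^10 = (x-u)^2 * (x^2+u^2)^2 := by
    linear_combination (y^5 + (x-u)*(x^2+u^2)) * h.symm
  have hs : 0 ≤ x^2 + u^2 := by positivity
  have hxu : (x-u)^2 ≤ 2*(x^2+u^2) := by nlinarith [sq_nonneg (x+u)]
  have hypos : 0 < y^10 := by positivity
  have h1 : y^10 ≤ 2*(x^2+u^2)^3 := by
    nlinarith [mul_le_mul_of_nonneg_right hxu (sq_nonneg (x^2+u^2))]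
  have h2 : (x^2+u^2)^3 < (y^4/2)^3 := pow_lt_pow_left₀ (by linarith) hs (by norm_num)
  have h3 : y^12 = y^10 * y^2 := by ring
  nlinarith [h1, h2, h3, hypos, hy2]

lemma key (x₁ y₁ u₁ x₂ y₂ u₂ : ℝ)
    (h₁ : (x₁ - u₁) * (x₁^2 + u₁^2) = y₁^5)
    (h₂ : (x₂ - u₂) * (x₂^2 + u₂^2) = y₂^5)
    (hy₁ : |y₁| ≤ 1) (hy₂ : |y₂| ≤ 1) :
    |u₁ - u₂| ≤ 40 * (|x₁ - x₂| + |y₁ - y₂|) := by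
  have hb₁ := bound4 x₁ u₁ y₁ h₁ hy₁
  have hb₂ := bound4 x₂ u₂ y₂ h₂ hy₂
  set R := x₁^2 + x₂^2 + u₁^2 + u₂^2 with hR
  set Q := x₁^2 + x₂^2 - (x₁+x₂)*(u₁+u₂) + 2*(u₁^2 + u₁*u₂ + u₂^2) with hQ
  set S := 2*(x₁^2 + x₁*x₂ + x₂^2) - (u₁+u₂)*(x₁+x₂) + u₁^2 + u₂^2 with hS
  have hmain : Q * (u₁ - u₂) = S * (x₁ - x₂) - 2*(y₁^5 - y₂^5) := by
    rw [hQ, hS]; linear_combination -2*h₁ + 2*h₂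
  have hQR : R/2 ≤ Q := lemQR x₁ x₂ u₁ u₂
  have hRpos : (0:ℝ) ≤ R := by positivity
  have hSR : |S| ≤ 4 * R := lemSR x₁ x₂ u₁ u₂
  have h14 : y₁^4 + y₂^4 ≤ 2 * R := by rw [hR]; linarith
  have hSum : |y₁^4+y₁^3*y₂+y₁^2*y₂^2+y₁*y₂^3+y₂^4| ≤ 10 * R := by
    calc _ ≤ 5*(y₁^4+y₂^4) := lemSum y₁ y₂
    _ ≤ 10 * R := by linarith
  have h5 : |y₁^5 - y₂^5| ≤ 10 * R * |y₁ - y₂| := by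
    have hfac : y₁^5 - y₂^5 = (y₁ - y₂) * (y₁^4 + y₁^3*y₂ + y₁^2*y₂^2 + y₁*y₂^3 + y₂^4) := by ring
    calc |y₁^5 - y₂^5| = |y₁ - y₂| * |y₁^4 + y₁^3*y₂ + y₁^2*y₂^2 + y₁*y₂^3 + y₂^4| := by
          rw [hfac, abs_mul]
    _ ≤ |y₁ - y₂| * (10*R) := mul_le_mul_of_nonneg_left hSum (abs_nonneg _)
    _ = 10 * R * |y₁ - y₂| := by ring
  rcases eq_or_lt_of_le hRpos with hR0 | hR0
  · have hexp : x₁^2 + x₂^2 + u₁^2 + u₂^2 = 0 := by rw [← hR, ← hR0]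
    have hq1 : u₁^2 = 0 := le_antisymm (by linarith [sq_nonneg x₁, sq_nonneg x₂, sq_nonneg u₂]) (sq_nonneg u₁)
    have hq2 : u₂^2 = 0 := le_antisymm (by linarith [sq_nonneg x₁, sq_nonneg x₂, sq_nonneg u₁]) (sq_nonneg u₂)
    have hu₁ : u₁ = 0 := sq_eq_zero_iff.mp hq1
    have hu₂ : u₂ = 0 := sq_eq_zero_iff.mp hq2
    rw [hu₁, hu₂, sub_zero, abs_zero]
    positivity
  · have hQabs : Q * |u₁ - u₂| ≤ 4*R*|x₁-x₂| + 2*(10*R*|y₁-y₂|) := by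
      have h1 : Q * |u₁ - u₂| = |Q * (u₁ - u₂)| := by
        rw [abs_mul, abs_of_nonneg (by linarith : (0:ℝ) ≤ Q)]
      rw [h1, hmain]
      calc |S * (x₁ - x₂) - 2*(y₁^5 - y₂^5)| ≤ |S * (x₁-x₂)| + |2*(y₁^5-y₂^5)| := abs_sub _ _
        _ = |S| * |x₁-x₂| + 2*|y₁^5-y₂^5| := by rw [abs_mul, abs_mul]; norm_num
        _ ≤ 4*R*|x₁-x₂| + 2*(10*R*|y₁-y₂|) := by
            have := mul_le_mul_of_nonneg_right hSR (abs_nonneg (x₁-x₂))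
            linarith
    have hfin : R * (|u₁-u₂|/2) ≤ R * (4*|x₁-x₂| + 20*|y₁-y₂|) := by
      calc R * (|u₁-u₂|/2) = (R/2) * |u₁-u₂| := by ring
      _ ≤ Q * |u₁-u₂| := mul_le_mul_of_nonneg_right hQR (abs_nonneg _)
      _ ≤ 4*R*|x₁-x₂| + 2*(10*R*|y₁-y₂|) := hQabs
      _ = R * (4*|x₁-x₂| + 20*|y₁-y₂|) := by ring
    have hdiv := (mul_le_mul_iff_right₀ hR0).mp hfin
    have hx := abs_nonneg (x₁-x₂); have hy := abs_nonneg (y₁-y₂)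
    linarith

lemma branch_id (χ : ℝ → ℝ) (hc : Continuous χ) (hm : StrictMono χ) (c : ℝ)
    (h : ∀ z, χ z = -z ∨ (z - χ z) * (z^2 + (χ z)^2) = c) :
    ∀ z, (z - χ z) * (z^2 + (χ z)^2) = c := by
  by_cases hex : ∃ z₀, χ z₀ = -z₀
  · obtain ⟨z₀, h₀⟩ := hex
    have heq : Set.EqOn (fun z => (z - χ z) * (z^2 + (χ z)^2)) (fun _ => c) {z₀}ᶜ := by
      intro z hz
      rcases h z with h' | h'
      · exfalso
        have hzz : z ≠ z₀ := hz
        rcases hzz.lt_or_gt with hlt | hlt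
        · have := hm hlt
          rw [h', h₀] at this
          linarith
        · have := hm hlt
          rw [h', h₀] at this
          linarith
      · exact h'
    have hF : Continuous fun z => (z - χ z) * (z^2 + (χ z)^2) := by continuity
    have := hF.ext_on (dense_compl_singleton z₀) continuous_const heq
    intro z
    exact congrFun this z
  · push_neg at hex
    intro z
    rcases h z with h' | h'
    · exact absurd h' (hex z)
    · exact h'

lemma sigma_snd (χ : ℝ → ℝ) (p : ℝ × ℝ) : (sigmaMap χ p).2 = p.2 := by
  unfold sigmaMap
  split_ifs with h
  · simp [h]
  · rfl

lemma rel_sigma (χ : ℝ → ℝ) (c : ℝ) (hid : ∀ z, (z - χ z) * (z^2 + (χ z)^2) = c)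
    (p : ℝ × ℝ) :
    (p.1 - (sigmaMap χ p).1) * (p.1^2 + ((sigmaMap χ p).1)^2) = c * p.2^5 := by
  unfold sigmaMap
  split_ifs with h
  · simp [h]
  · have ht : pow53 p.2 ≠ 0 := pow53_ne_zero h
    have ht3 : (pow53 p.2)^3 = p.2^5 := pow53_cube p.2
    set t := pow53 p.2
    set z := p.1 / t with hz
    have hx : t * z = p.1 := mul_div_cancel₀ p.1 ht
    simp only []
    rw [← hx, ← ht3]
    linear_combination t^3 * hid z

lemma lip_sigma (χ : ℝ → ℝ) (c : ℝ) (hc : c = 1 ∨ c = -1)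
    (hid : ∀ z, (z - χ z) * (z^2 + (χ z)^2) = c) :
    LipschitzOnWith 80 (sigmaMap χ) {q : ℝ × ℝ | |q.2| < 1} := by
  have hrel := rel_sigma χ c hid
  rw [lipschitzOnWith_iff_dist_le_mul]
  intro p hp q hq
  have hcy : ∀ y : ℝ, c * y^5 = (c*y)^5 := by
    intro y; rcases hc with rfl | rfl <;> ring
  have h₁ : (p.1 - (sigmaMap χ p).1) * (p.1^2 + ((sigmaMap χ p).1)^2) = (c*p.2)^5 := by
    rw [← hcy]; exact hrel p
  have h₂ : (q.1 - (sigmaMap χ q).1) * (q.1^2 + ((sigmaMap χ q).1)^2) = (c*q.2)^5 := by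
    rw [← hcy]; exact hrel q
  have hcabs : |c| = 1 := by rcases hc with rfl | rfl <;> simp
  have hy₁ : |c * p.2| ≤ 1 := by
    rw [abs_mul, hcabs, one_mul]; exact (hp : |p.2| < 1).le
  have hy₂ : |c * q.2| ≤ 1 := by
    rw [abs_mul, hcabs, one_mul]; exact (hq : |q.2| < 1).le
  have hk := key p.1 (c*p.2) (sigmaMap χ p).1 q.1 (c*q.2) (sigmaMap χ q).1 h₁ h₂ hy₁ hy₂
  have hyy : |c*p.2 - c*q.2| = |p.2 - q.2| := by
    rw [show c*p.2 - c*q.2 = c*(p.2-q.2) by ring, abs_mul, hcabs, one_mul]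
  rw [hyy] at hk
  rw [Prod.dist_eq, Prod.dist_eq, sigma_snd, sigma_snd]
  simp only [Real.dist_eq]
  push_cast
  have hmax1 : |p.1 - q.1| ≤ max |p.1 - q.1| |p.2 - q.2| := le_max_left _ _
  have hmax2 : |p.2 - q.2| ≤ max |p.1 - q.1| |p.2 - q.2| := le_max_right _ _
  have hbound : |(sigmaMap χ p).1 - (sigmaMap χ q).1| ≤ 80 * max |p.1 - q.1| |p.2 - q.2| := by
    calc |(sigmaMap χ p).1 - (sigmaMap χ q).1| ≤ 40 * (|p.1 - q.1| + |p.2 - q.2|) := hk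
    _ ≤ 80 * max |p.1 - q.1| |p.2 - q.2| := by linarith
  rw [max_le_iff]
  refine ⟨hbound, ?_⟩
  calc |p.2 - q.2| ≤ max |p.1 - q.1| |p.2 - q.2| := hmax2
  _ ≤ 80 * max |p.1 - q.1| |p.2 - q.2| := by
      nlinarith [abs_nonneg (p.1-q.1), abs_nonneg (p.2-q.2), le_max_right |p.1 - q.1| |p.2 - q.2|]

lemma cont_sigma (χ : ℝ → ℝ) (hχ : Continuous χ) (c : ℝ) (hc : c = 1 ∨ c = -1)
    (hid : ∀ z, (z - χ z) * (z^2 + (χ z)^2) = c) :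
    Continuous (sigmaMap χ) := by
  rw [continuous_iff_continuousAt]
  intro p
  by_cases hy : p.2 = 0
  · have hU : IsOpen {q : ℝ × ℝ | |q.2| < 1} := by
      have : Continuous fun q : ℝ × ℝ => |q.2| := continuous_snd.abs
      exact isOpen_lt this continuous_const
    have hpU : p ∈ {q : ℝ × ℝ | |q.2| < 1} := by
      simp only [Set.mem_setOf_eq, hy, abs_zero]; norm_num
    exact ((lip_sigma χ c hc hid).continuousOn).continuousAt (hU.mem_nhds hpU)
  · have hev : sigmaMap χ =ᶠ[𝓝 p] fun q => (pow53 q.2 * χ (q.1 / pow53 q.2), q.2) := by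
      have hopen : IsOpen {q : ℝ × ℝ | q.2 ≠ 0} := isOpen_ne.preimage continuous_snd
      filter_upwards [hopen.mem_nhds hy] with q hq
      rw [sigmaMap, if_neg hq]
    refine ContinuousAt.congr ?_ hev.symm
    have hp53 : ContinuousAt (fun q : ℝ × ℝ => pow53 q.2) p :=
      (continuousAt_pow53 hy).comp continuousAt_snd
    have hne : pow53 p.2 ≠ 0 := pow53_ne_zero hy
    have hdiv : ContinuousAt (fun q : ℝ × ℝ => q.1 / pow53 q.2) p :=
      ContinuousAt.div continuousAt_fst hp53 hne
    have hchi : ContinuousAt (fun q : ℝ × ℝ => χ (q.1 / pow53 q.2)) p :=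
      (hχ.continuousAt).comp hdiv
    exact (hp53.mul hchi).prodMk continuousAt_snd

lemma sigma_inv (χ η : ℝ → ℝ) (hinv : ∀ z, η (χ z) = z) :
    ∀ p : ℝ × ℝ, sigmaMap η (sigmaMap χ p) = p := by
  intro p
  by_cases hy : p.2 = 0
  · have h1 : sigmaMap χ p = (p.1, 0) := by rw [sigmaMap, if_pos hy]
    rw [h1, sigmaMap, if_pos rfl]
    exact Prod.ext rfl hy.symm
  · have ht : pow53 p.2 ≠ 0 := pow53_ne_zero hy
    have h1 : sigmaMap χ p = (pow53 p.2 * χ (p.1 / pow53 p.2), p.2) := by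
      rw [sigmaMap, if_neg hy]
    rw [h1, sigmaMap, if_neg hy]
    refine Prod.ext ?_ rfl
    show pow53 p.2 * η ((pow53 p.2 * χ (p.1 / pow53 p.2)) / pow53 p.2) = p.1
    rw [mul_div_cancel_left₀ _ ht, hinv, mul_div_cancel₀ _ ht]

/-- The map `σ` built from the analytic diffeomorphism `φ` conjugating `z⁴ − z` to `z⁴ + z`
is a homeomorphism of `ℝ²` fixing the origin, bi-Lipschitz near the origin, and conjugates
`f(x,y) = x(x³−y⁵)` to `g(x,y) = x(x³+y⁵)`; hence `f` and `g` are bi-Lipschitz equivalent. -/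
theorem stmt17 (φ : ℝ → ℝ) (hφ : IsAnalyticDiffeo φ)
    (hconj : ∀ z : ℝ, z ^ 4 - z = (φ z) ^ 4 + φ z)
    (f g : ℝ × ℝ → ℝ)
    (hf : ∀ p : ℝ × ℝ, f p = p.1 * (p.1 ^ 3 - p.2 ^ 5))
    (hg : ∀ p : ℝ × ℝ, g p = p.1 * (p.1 ^ 3 + p.2 ^ 5)) :
    ∃ h : ℝ × ℝ ≃ₜ ℝ × ℝ, ⇑h = sigmaMap φ ∧ h 0 = 0 ∧
      (∃ (U V : Set (ℝ × ℝ)) (K K' : NNReal), IsOpen U ∧ (0 : ℝ × ℝ) ∈ U ∧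
        IsOpen V ∧ (0 : ℝ × ℝ) ∈ V ∧
        LipschitzOnWith K (sigmaMap φ) U ∧ LipschitzOnWith K' (⇑h.symm) V) ∧
      ∀ p : ℝ × ℝ, f p = g (sigmaMap φ p) := by
  obtain ⟨han, hmono, hbij, ψ, hψan, hl, hr⟩ := hφ
  have hφcont : Continuous φ := continuous_iff_continuousAt.mpr fun x => (han x).continuousAt
  have hψcont : Continuous ψ := continuous_iff_continuousAt.mpr fun x => (hψan x).continuousAt
  have hψmono : StrictMono ψ := by
    intro a b hab
    by_contra hcon
    push_neg at hcon
    have := hmono.monotone hcon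
    rw [hr a, hr b] at this
    exact absurd this (not_le.mpr hab)
  have hφid : ∀ z, (z - φ z) * (z^2 + (φ z)^2) = 1 := by
    apply branch_id φ hφcont hmono
    intro z
    have h0 : (φ z + z) * ((z - φ z) * (z^2 + (φ z)^2) - 1) = 0 := by
      linear_combination hconj z
    rcases mul_eq_zero.mp h0 with h' | h'
    · left; linarith
    · right; linarith
  have hψid : ∀ w, (w - ψ w) * (w^2 + (ψ w)^2) = -1 := by
    apply branch_id ψ hψcont hψmono
    intro w
    have hcw : (ψ w) ^ 4 - ψ w = w ^ 4 + w := by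
      have := hconj (ψ w)
      rw [hr w] at this
      linarith
    have h0 : (ψ w + w) * ((w - ψ w) * (w^2 + (ψ w)^2) - (-1)) = 0 := by
      linear_combination -hcw
    rcases mul_eq_zero.mp h0 with h' | h'
    · left; linarith
    · right; linarith
  have hcφ : Continuous (sigmaMap φ) := cont_sigma φ hφcont 1 (Or.inl rfl) hφid
  have hcψ : Continuous (sigmaMap ψ) := cont_sigma ψ hψcont (-1) (Or.inr rfl) hψid
  let h : ℝ × ℝ ≃ₜ ℝ × ℝ :=
    { toFun := sigmaMap φ
      invFun := sigmaMap ψ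
      left_inv := sigma_inv φ ψ hl
      right_inv := sigma_inv ψ φ hr
      continuous_toFun := hcφ
      continuous_invFun := hcψ }
  refine ⟨h, rfl, ?_, ?_, ?_⟩
  · show sigmaMap φ 0 = 0
    have : ((0 : ℝ × ℝ)).2 = 0 := rfl
    rw [sigmaMap, if_pos this]
    rfl
  · refine ⟨{q : ℝ × ℝ | |q.2| < 1}, {q : ℝ × ℝ | |q.2| < 1}, 80, 80, ?_, ?_, ?_, ?_, ?_, ?_⟩
    · exact isOpen_lt continuous_snd.abs continuous_const
    · simp
    · exact isOpen_lt continuous_snd.abs continuous_const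
    · simp
    · exact lip_sigma φ 1 (Or.inl rfl) hφid
    · exact lip_sigma ψ (-1) (Or.inr rfl) hψid
  · intro p
    rw [hf, hg]
    have hrel := rel_sigma φ 1 hφid p
    rw [sigma_snd]
    linear_combination (p.1 + (sigmaMap φ p).1) * hrel
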